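/- (Section 5.5, osp(2m|2)) Let λ ∈ 𝒫 and 1 ≤ k ≤ m with ⟨λ+ρ, δ+ε_k⟩ = 0 and λ_k ≠ 0, and suppose λ_m ≠ −λ_k. Let t be the largest index with k ≤ t ≤ m and |λ_t| = λ_k, and set φ(λ) = λ − (t−k+1)δ − Σ_{i=k}^{t} ε_i. Then φ(λ) ∈ 𝒫 and λ ∼ φ(λ). -/

import Mathlib

open Finset
open Fin.NatCast

/-- The standard basis vector `ε_i` of `ℚ^{1+m}` (with `ε_0 = δ`). -/
noncomputable def eps (m i : ℕ) : Fin (m+1) → ℚ := Pi.single (i : Fin (m+1)) 1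

/-- The bilinear form `⟨λ, μ⟩ = −λ₀μ₀ + Σ_{i=1}^m λ_i μ_i` on `ℚ^{1+m}`. -/
noncomputable def form (m : ℕ) (l μ : Fin (m+1) → ℚ) : ℚ :=
  -(l 0 * μ 0) + ∑ i : Fin (m+1), (if i = 0 then 0 else l i * μ i)

/-- `ρ` for `osp(2m|2)`: `ρ₀ = 1−m`, `ρ_i = m−i`. -/
noncomputable def rhoD (m : ℕ) : Fin (m+1) → ℚ :=
  fun i => if i = 0 then 1 - (m : ℚ) else (m : ℚ) - (i : ℕ)

/-- `ρ` for `osp(2m+1|2)`: `ρ₀ = 1/2−m`, `ρ_i = m−i+1/2`. -/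
noncomputable def rhoB (m : ℕ) : Fin (m+1) → ℚ :=
  fun i => if i = 0 then 1/2 - (m : ℚ) else (m : ℚ) - (i : ℕ) + 1/2

/-- All coordinates are integers. -/
def IsIntegralWt (m : ℕ) (l : Fin (m+1) → ℚ) : Prop := ∀ i, ∃ z : ℤ, l i = z

/-- Dominant integral weights for `osp(2m|2)`. -/
def PD (m : ℕ) (l : Fin (m+1) → ℚ) : Prop :=
  IsIntegralWt m l ∧ 0 ≤ l 0 ∧
  (∀ i j : ℕ, 1 ≤ i → i ≤ j → j ≤ m - 1 → l (j : Fin (m+1)) ≤ l (i : Fin (m+1))) ∧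
  |l (m : Fin (m+1))| ≤ l ((m - 1 : ℕ) : Fin (m+1)) ∧
  (∀ i : ℕ, 1 ≤ i → i ≤ m - 1 → 0 ≤ l (i : Fin (m+1))) ∧
  (∀ i : ℕ, 1 ≤ i → i ≤ m → l 0 < (i : ℚ) → l (i : Fin (m+1)) = 0)

/-- Dominant integral weights for `osp(2m+1|2)`. -/
def PB (m : ℕ) (l : Fin (m+1) → ℚ) : Prop :=
  IsIntegralWt m l ∧ 0 ≤ l 0 ∧
  (∀ i j : ℕ, 1 ≤ i → i ≤ j → j ≤ m → l (j : Fin (m+1)) ≤ l (i : Fin (m+1))) ∧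
  (∀ i : ℕ, 1 ≤ i → i ≤ m → 0 ≤ l (i : Fin (m+1))) ∧
  (∀ i : ℕ, 1 ≤ i → i ≤ m → l 0 < (i : ℚ) → l (i : Fin (m+1)) = 0)

/-- `λ` is atypical (w.r.t. a given `ρ`): `⟨λ+ρ, δ+s·ε_i⟩ = 0` for some `1 ≤ i ≤ m`, `s = ±1`. -/
def Atyp (m : ℕ) (ρ l : Fin (m+1) → ℚ) : Prop :=
  ∃ i : ℕ, 1 ≤ i ∧ i ≤ m ∧ ∃ s : ℚ, (s = 1 ∨ s = -1) ∧
    form m (l + ρ) (eps m 0 + s • eps m i) = 0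

abbrev GLQ (m : ℕ) := (Fin (m+1) → ℚ) ≃ₗ[ℚ] (Fin (m+1) → ℚ)

/-- Permutations of the coordinates `1, …, m` (fixing coordinate `0`). -/
def permSet (m : ℕ) : Set (GLQ m) :=
  {w | ∃ σ : Equiv.Perm (Fin (m+1)), σ 0 = 0 ∧ ∀ v, w v = v ∘ σ}

/-- The sign change of coordinate `0`. -/
def flip0Set (m : ℕ) : Set (GLQ m) :=
  {w | ∀ v k, w v k = if k = 0 then -(v k) else v k}

/-- Simultaneous sign changes of two coordinates among `1, …, m`. -/
def doubleFlipSet (m : ℕ) : Set (GLQ m) :=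
  {w | ∃ i j : Fin (m+1), i ≠ 0 ∧ j ≠ 0 ∧ i ≠ j ∧
    ∀ v k, w v k = if k = i ∨ k = j then -(v k) else v k}

/-- Sign changes of a single coordinate among `1, …, m`. -/
def singleFlipSet (m : ℕ) : Set (GLQ m) :=
  {w | ∃ i : Fin (m+1), i ≠ 0 ∧ ∀ v k, w v k = if k = i then -(v k) else v k}

/-- The Weyl group for `osp(2m|2)`. -/
def WD (m : ℕ) : Subgroup (GLQ m) :=
  Subgroup.closure (permSet m ∪ doubleFlipSet m ∪ flip0Set m)

/-- The Weyl group for `osp(2m+1|2)`. -/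
def WB (m : ℕ) : Subgroup (GLQ m) :=
  Subgroup.closure (permSet m ∪ singleFlipSet m ∪ flip0Set m)

/-- The block equivalence: the smallest equivalence relation with
`μ ∼ μ+α` for odd roots `α = ±(δ±ε_i)` with `⟨μ+ρ, α⟩ = 0`, and
`μ ∼ w(μ+ρ)−ρ` for `w ∈ W`. -/
def blockRel (m : ℕ) (ρ : Fin (m+1) → ℚ) (W : Subgroup (GLQ m)) :
    (Fin (m+1) → ℚ) → (Fin (m+1) → ℚ) → Prop :=
  Relation.EqvGen (fun μ ν =>
    (∃ i : ℕ, 1 ≤ i ∧ i ≤ m ∧ ∃ s t : ℚ, (s = 1 ∨ s = -1) ∧ (t = 1 ∨ t = -1) ∧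
      form m (μ + ρ) (t • (eps m 0 + s • eps m i)) = 0 ∧
      ν = μ + t • (eps m 0 + s • eps m i)) ∨
    (∃ w ∈ W, ν = w (μ + ρ) - ρ))

def blockD (m : ℕ) : (Fin (m+1) → ℚ) → (Fin (m+1) → ℚ) → Prop :=
  blockRel m (rhoD m) (WD m)

def blockB (m : ℕ) : (Fin (m+1) → ℚ) → (Fin (m+1) → ℚ) → Prop :=
  blockRel m (rhoB m) (WB m)

/-- The set `𝒫_λ = 𝒫_{λ+} ∪ 𝒫_{λ−}` for `osp(2m|2)`. -/
noncomputable def PlamD (m : ℕ) (l : Fin (m+1) → ℚ) : Set (Fin (m+1) → ℚ) :=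
  {μ | PD m μ ∧
    (μ = l + eps m 0 ∨ μ = l - eps m 0 ∨
     (∃ i : ℕ, 1 ≤ i ∧ i ≤ m - 1 ∧ (μ = l + eps m i ∨ μ = l - eps m i)) ∨
     (0 ≤ l (m : Fin (m+1)) ∧ μ = l + eps m m) ∨
     (l (m : Fin (m+1)) ≤ 0 ∧ μ = l - eps m m) ∨
     (l (m : Fin (m+1)) < 0 ∧ μ = l + eps m m) ∨
     (0 < l (m : Fin (m+1)) ∧ μ = l - eps m m))}

/-- The set `𝒫_λ = 𝒫_{λ+} ∪ 𝒫_{λ−}` for `osp(2m+1|2)`. -/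
noncomputable def PlamB (m : ℕ) (l : Fin (m+1) → ℚ) : Set (Fin (m+1) → ℚ) :=
  {μ | PB m μ ∧
    ((∃ i : ℕ, i ≤ m ∧ (μ = l + eps m i ∨ μ = l - eps m i)) ∨
     (l (m : Fin (m+1)) ≠ 0 ∧ μ = l))}

/-- The weight `λ^{j,q}`. -/
noncomputable def lamJQ (m : ℕ) (l : Fin (m+1) → ℚ) (l0 j : ℕ) (q : ℤ) : Fin (m+1) → ℚ :=
  ((j : ℚ) - (q : ℚ)) • eps m 0 + (∑ i ∈ Finset.Icc 1 j, l (i : Fin (m+1)) • eps m i) +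
    (q : ℚ) • eps m (j + 1) +
    ∑ i ∈ Finset.Icc (j+1) l0, (l (i : Fin (m+1)) + 1) • eps m (i+1)

/-- The weight `λ^{j,q}_−`. -/
noncomputable def lamJQm (m : ℕ) (l : Fin (m+1) → ℚ) (l0 j : ℕ) (q : ℤ) : Fin (m+1) → ℚ :=
  ((j : ℚ) - (q : ℚ)) • eps m 0 + (∑ i ∈ Finset.Icc 1 j, l (i : Fin (m+1)) • eps m i) +
    (q : ℚ) • eps m (j + 1) +
    (∑ i ∈ Finset.Icc (j+1) (l0 - 1), (l (i : Fin (m+1)) + 1) • eps m (i+1)) -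
    (l (l0 : Fin (m+1)) + 1) • eps m (l0 + 1)

/-- `λ^δ` for `osp(2m|2)`: coordinate `0` becomes `2m−2−λ₀`. -/
noncomputable def deltaD (m : ℕ) (l : Fin (m+1) → ℚ) : Fin (m+1) → ℚ :=
  fun i => if i = 0 then 2*(m : ℚ) - 2 - l 0 else l i

/-- `λ^δ` for `osp(2m+1|2)`: coordinate `0` becomes `2m−1−λ₀`. -/
noncomputable def deltaB (m : ℕ) (l : Fin (m+1) → ℚ) : Fin (m+1) → ℚ :=
  fun i => if i = 0 then 2*(m : ℚ) - 1 - l 0 else l i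

lemma fin_coe_val {m i : ℕ} (hi : i ≤ m) : ((i : Fin (m+1)) : ℕ) = i := by
  simp [Fin.val_natCast, Nat.mod_eq_of_lt (Nat.lt_succ_of_le hi)]

lemma fin_ne_zero {m i : ℕ} (h1 : 1 ≤ i) (hi : i ≤ m) : (i : Fin (m+1)) ≠ 0 := by
  apply Fin.ne_of_val_ne
  rw [fin_coe_val hi]
  simp only [Fin.val_zero]
  omega

lemma eps_apply (m i : ℕ) (hi : i ≤ m) (j : Fin (m+1)) :
    eps m i j = if (j : ℕ) = i then 1 else 0 := by
  unfold eps
  rw [Pi.single_apply]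
  congr 1
  simp only [eq_iff_iff]
  constructor
  · rintro rfl; exact fin_coe_val hi
  · intro h; exact Fin.ext (by rw [fin_coe_val hi]; exact h)

lemma sum_eps_apply (m : ℕ) (s : Finset ℕ) (hs : ∀ i ∈ s, i ≤ m) (j : Fin (m+1)) :
    (∑ i ∈ s, eps m i) j = if (j : ℕ) ∈ s then 1 else 0 := by
  rw [Finset.sum_apply, Finset.sum_congr rfl (fun i hi => eps_apply m i (hs i hi) j)]
  exact Finset.sum_ite_eq s (j : ℕ) (fun _ => 1)

lemma rhoD_zero (m : ℕ) : rhoD m 0 = 1 - m := by simp [rhoD]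

lemma rhoD_apply (m i : ℕ) (h1 : 1 ≤ i) (hi : i ≤ m) :
    rhoD m (i : Fin (m+1)) = (m : ℚ) - i := by
  unfold rhoD
  rw [if_neg (fin_ne_zero h1 hi), fin_coe_val hi]

lemma form_eval (m : ℕ) (μ : Fin (m+1) → ℚ) (i : ℕ) (h1 : 1 ≤ i) (hi : i ≤ m) (s : ℚ) :
    form m μ (eps m 0 + s • eps m i) = -(μ 0) + s * μ (i : Fin (m+1)) := by
  have hne := fin_ne_zero h1 hi
  unfold form
  have hv : ((i : Fin (m+1)) : ℕ) = i := fin_coe_val hi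
  have h0 : (eps m 0 + s • eps m i) 0 = 1 := by
    rw [Pi.add_apply, Pi.smul_apply, eps_apply m 0 (Nat.zero_le m), eps_apply m i hi]
    simp only [Fin.val_zero]
    simp [show (0:ℕ) ≠ i by omega]
  have hsum : ∑ j : Fin (m+1), (if j = 0 then 0 else μ j * (eps m 0 + s • eps m i) j)
      = s * μ (i : Fin (m+1)) := by
    rw [Finset.sum_eq_single_of_mem (i : Fin (m+1)) (Finset.mem_univ _)]
    · rw [if_neg hne, Pi.add_apply, Pi.smul_apply, eps_apply m 0 (Nat.zero_le m),
        eps_apply m i hi, hv, if_neg (by omega), if_pos rfl]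
      simp; ring
    · intro b _ hb
      rcases eq_or_ne b 0 with rfl | hb0
      · rw [if_pos rfl]
      · rw [if_neg hb0, Pi.add_apply, Pi.smul_apply, eps_apply m 0 (Nat.zero_le m),
          eps_apply m i hi]
        have hbv0 : ((b : Fin (m+1)) : ℕ) ≠ 0 := fun h => hb0 (Fin.ext h)
        have hbvi : ((b : Fin (m+1)) : ℕ) ≠ i := fun h => hb (Fin.ext (by rw [hv]; exact h))
        rw [if_neg hbv0, if_neg hbvi]
        simp
  rw [hsum, h0]
  ring


lemma form_smul (m : ℕ) (μ v : Fin (m+1) → ℚ) (c : ℚ) :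
    form m μ (c • v) = c * form m μ v := by
  unfold form
  rw [mul_add, Finset.mul_sum]
  congr 1
  · simp; ring
  · apply Finset.sum_congr rfl
    intro j _
    split_ifs <;> simp <;> ring

noncomputable def nuAux (m k : ℕ) (l : Fin (m+1) → ℚ) (d : ℕ) : Fin (m+1) → ℚ :=
  l - (d : ℚ) • eps m 0 - ∑ i ∈ Finset.Ico k (k+d), eps m i

lemma nuAux_apply (m k : ℕ) (l : Fin (m+1) → ℚ) (d : ℕ) (hkd : k + d ≤ m + 1)
    (j : Fin (m+1)) :
    nuAux m k l d j = l j - (if (j : ℕ) = 0 then (d : ℚ) else 0) -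
      (if (j : ℕ) ∈ Finset.Ico k (k+d) then 1 else 0) := by
  unfold nuAux
  rw [Pi.sub_apply, Pi.sub_apply, Pi.smul_apply, eps_apply m 0 (Nat.zero_le m),
    sum_eps_apply m _ (fun i hi => by simp [Finset.mem_Ico] at hi; omega)]
  split_ifs <;> simp

lemma nuAux_zero (m k : ℕ) (l : Fin (m+1) → ℚ) : nuAux m k l 0 = l := by
  simp [nuAux]

lemma nuAux_succ (m k : ℕ) (l : Fin (m+1) → ℚ) (d : ℕ) :
    nuAux m k l (d+1) = nuAux m k l d + (-1 : ℚ) • (eps m 0 + (1:ℚ) • eps m (k+d)) := by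
  unfold nuAux
  have : k + (d+1) = (k+d) + 1 := rfl
  rw [this, Finset.sum_Ico_succ_top (Nat.le_add_right k d)]
  push_cast
  module


lemma int_lt_le {x y : ℚ} (hx : ∃ a : ℤ, x = a) (hy : ∃ b : ℤ, y = b) (h : x < y) :
    x + 1 ≤ y := by
  obtain ⟨a, rfl⟩ := hx
  obtain ⟨b, rfl⟩ := hy
  have : a < b := by exact_mod_cast h
  have : a + 1 ≤ b := this
  exact_mod_cast this

/-- Section 5.5 for `osp(2m|2)`: if `λ ∈ 𝒫` is `(δ+ε_k)`-atypical with `λ_k ≠ 0`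
and `λ_m ≠ −λ_k`, and `t` is the largest index with `k ≤ t ≤ m` and `|λ_t| = λ_k`,
then `φ(λ) = λ − (t−k+1)δ − Σ_{i=k}^t ε_i ∈ 𝒫` and `λ ∼ φ(λ)`. -/
theorem phi_dominant_equiv_D (m : ℕ) (hm : 2 ≤ m) (l : Fin (m+1) → ℚ) (hP : PD m l)
    (k : ℕ) (hk1 : 1 ≤ k) (hkm : k ≤ m)
    (hat : form m (l + rhoD m) (eps m 0 + eps m k) = 0)
    (hlk : l (k : Fin (m+1)) ≠ 0)
    (hlm : l (m : Fin (m+1)) ≠ - l (k : Fin (m+1)))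
    (t : ℕ) (htk : k ≤ t) (htm : t ≤ m)
    (ht : |l (t : Fin (m+1))| = l (k : Fin (m+1)))
    (htmax : ∀ u : ℕ, t < u → u ≤ m → |l (u : Fin (m+1))| ≠ l (k : Fin (m+1))) :
    PD m (l - ((t : ℚ) - (k : ℚ) + 1) • eps m 0 - ∑ i ∈ Finset.Icc k t, eps m i) ∧
    blockD m l (l - ((t : ℚ) - (k : ℚ) + 1) • eps m 0 - ∑ i ∈ Finset.Icc k t, eps m i) := by
  obtain ⟨hI, h0, hmono, habs, hnn, hzero⟩ := hP
  -- atypicality equation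
  rw [← one_smul ℚ (eps m k), form_eval m _ k hk1 hkm 1] at hat
  simp only [Pi.add_apply, rhoD_zero, rhoD_apply m k hk1 hkm, one_mul] at hat
  have hl0 : l (k : Fin (m+1)) = l 0 + 1 - 2*m + k := by linarith
  have hknn : 0 ≤ l (k : Fin (m+1)) := ht ▸ abs_nonneg _
  have hk1q : 1 ≤ l (k : Fin (m+1)) := by
    have h := int_lt_le ⟨0, rfl⟩ (hI _) (lt_of_le_of_ne hknn (Ne.symm hlk))
    push_cast at h
    linarith
  -- all coordinates between k and t equal l k
  have hA : ∀ i : ℕ, k ≤ i → i ≤ t → l (i : Fin (m+1)) = l (k : Fin (m+1)) := by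
    intro i hki hit
    have him : i ≤ m := le_trans hit htm
    rcases eq_or_lt_of_le him with him' | hlt
    · have htm' : t = m := by omega
      have hc : ((t : ℕ) : Fin (m+1)) = ((m : ℕ) : Fin (m+1)) := by rw [htm']
      rw [him']
      rcases (abs_eq hknn).mp ht with h | h
      · rw [hc] at h
        exact h
      · rw [hc] at h
        exact absurd h hlm
    · have hup : l (i : Fin (m+1)) ≤ l (k : Fin (m+1)) :=
        hmono k i hk1 hki (by omega)
      rcases eq_or_lt_of_le htm with htm' | hlt2
      · have h1 : l ((m-1 : ℕ) : Fin (m+1)) ≤ l (i : Fin (m+1)) :=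
          hmono i (m-1) (by omega) (by omega) (by omega)
        have h2 := habs
        have hc : ((t : ℕ) : Fin (m+1)) = ((m : ℕ) : Fin (m+1)) := by rw [htm']
        have htabs : |l (m : Fin (m+1))| = l (k : Fin (m+1)) := by rw [← hc]; exact ht
        have h3 : l (k : Fin (m+1)) ≤ l ((m-1 : ℕ) : Fin (m+1)) := htabs ▸ h2
        linarith
      · have h1 : l (t : Fin (m+1)) ≤ l (i : Fin (m+1)) :=
          hmono i t (by omega) hit (by omega)
        have htnn : 0 ≤ l (t : Fin (m+1)) := hnn t (by omega) (by omega)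
        rw [abs_of_nonneg htnn] at ht
        linarith
  -- rewrite the goal weight as nuAux
  have hcast : ((t-k+1 : ℕ) : ℚ) = (t:ℚ) - (k:ℚ) + 1 := by
    rw [Nat.cast_add, Nat.cast_sub htk, Nat.cast_one]
  have hphi_eq : (l - ((t : ℚ) - (k : ℚ) + 1) • eps m 0 - ∑ i ∈ Finset.Icc k t, eps m i)
      = nuAux m k l (t-k+1) := by
    unfold nuAux
    rw [show k + (t-k+1) = t+1 by omega, Finset.Ico_add_one_right_eq_Icc, hcast]
  rw [hphi_eq]
  have hphi : ∀ j : Fin (m+1), nuAux m k l (t-k+1) j =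
      l j - (if (j : ℕ) = 0 then (t:ℚ) - (k:ℚ) + 1 else 0) -
      (if (j : ℕ) ∈ Finset.Icc k t then 1 else 0) := by
    intro j
    rw [nuAux_apply m k l _ (by omega) j,
      show k + (t-k+1) = t+1 by omega, Finset.Ico_add_one_right_eq_Icc, hcast]
  have hphiN : ∀ i : ℕ, i ≤ m → nuAux m k l (t-k+1) (i : Fin (m+1)) =
      l (i : Fin (m+1)) - (if i = 0 then (t:ℚ) - (k:ℚ) + 1 else 0) -
      (if k ≤ i ∧ i ≤ t then 1 else 0) := by
    intro i hi
    rw [hphi, fin_coe_val hi]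
    simp only [Finset.mem_Icc]
  have hphi0 : nuAux m k l (t-k+1) 0 = l 0 - ((t:ℚ) - (k:ℚ) + 1) := by
    have h00 : ((0 : Fin (m+1)) : ℕ) = 0 := rfl
    have hnot : ¬ ((0:ℕ) ∈ Finset.Icc k t) := by
      simp only [Finset.mem_Icc]
      omega
    rw [hphi 0, h00, if_pos rfl, if_neg hnot]
    ring
  have htq : (t:ℚ) ≤ (m:ℚ) := by exact_mod_cast htm
  have hkq : (1:ℚ) ≤ (k:ℚ) := by exact_mod_cast hk1
  have hktq : (k:ℚ) ≤ (t:ℚ) := by exact_mod_cast htk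
  have hmq : (2:ℚ) ≤ (m:ℚ) := by exact_mod_cast hm
  constructor
  · refine ⟨?_, ?_, ?_, ?_, ?_, ?_⟩
    · -- integrality
      intro j
      obtain ⟨z, hz⟩ := hI j
      refine ⟨z - (if (j : ℕ) = 0 then (t:ℤ) - (k:ℤ) + 1 else 0) -
        (if (j : ℕ) ∈ Finset.Icc k t then 1 else 0), ?_⟩
      rw [hphi j, hz]
      split_ifs <;> push_cast <;> ring
    · -- nonneg 0th coordinate
      rw [hphi0]
      linarith
    · -- monotone
      intro i j h1i hij hjm
      have hi0 : ¬ (i = 0) := by omega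
      have hj0 : ¬ (j = 0) := by omega
      rw [hphiN i (by omega), hphiN j (by omega), if_neg hi0, if_neg hj0]
      simp only [sub_zero]
      by_cases hmi : k ≤ i ∧ i ≤ t <;> by_cases hmj : k ≤ j ∧ j ≤ t
      · rw [if_pos hmi, if_pos hmj]
        linarith [hmono i j h1i hij hjm]
      · rw [if_pos hmi, if_neg hmj]
        have htj : t < j := by omega
        have h1 : l (j : Fin (m+1)) ≤ l (k : Fin (m+1)) :=
          hmono k j hk1 (by omega) hjm
        have h2 : l (j : Fin (m+1)) ≠ l (k : Fin (m+1)) := by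
          have h3 := htmax j htj (by omega)
          rwa [abs_of_nonneg (hnn j (by omega) hjm)] at h3
        have h3 := int_lt_le (hI _) (hI _) (lt_of_le_of_ne h1 h2)
        have h4 : l (i : Fin (m+1)) = l (k : Fin (m+1)) := hA i hmi.1 hmi.2
        linarith
      · rw [if_neg hmi, if_pos hmj]
        linarith [hmono i j h1i hij hjm]
      · rw [if_neg hmi, if_neg hmj]
        linarith [hmono i j h1i hij hjm]
    · -- abs condition
      have hm0 : ¬ (m = 0) := by omega
      have hm10 : ¬ (m - 1 = 0) := by omega
      rw [hphiN m le_rfl, hphiN (m-1) (by omega), if_neg hm0, if_neg hm10]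
      simp only [sub_zero]
      by_cases htm' : t = m
      · have hmem : k ≤ m ∧ m ≤ t := by omega
        rw [if_pos hmem]
        have hlmk : l (m : Fin (m+1)) = l (k : Fin (m+1)) := hA m hkm (by omega)
        by_cases hk' : k ≤ m - 1
        · have hmem2 : k ≤ m-1 ∧ m-1 ≤ t := by omega
          rw [if_pos hmem2, hlmk, hA (m-1) hk' (by omega)]
          rw [abs_of_nonneg (show (0:ℚ) ≤ l (k : Fin (m+1)) - 1 by linarith)]
        · have hmem2 : ¬ (k ≤ m-1 ∧ m-1 ≤ t) := by omega
          rw [if_neg hmem2, hlmk]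
          rw [abs_of_nonneg (show (0:ℚ) ≤ l (k : Fin (m+1)) - 1 by linarith)]
          have h2 := habs
          rw [hlmk, abs_of_nonneg (by linarith)] at h2
          linarith
      · have hmem : ¬ (k ≤ m ∧ m ≤ t) := by omega
        rw [if_neg hmem]
        simp only [sub_zero]
        by_cases ht' : t = m - 1
        · have hmem2 : k ≤ m-1 ∧ m-1 ≤ t := by omega
          rw [if_pos hmem2]
          have h1 : l ((m-1 : ℕ) : Fin (m+1)) = l (k : Fin (m+1)) :=
            hA (m-1) (by omega) (by omega)
          have h2 := habs
          rw [h1] at h2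
          have h3 : |l (m : Fin (m+1))| ≠ l (k : Fin (m+1)) := htmax m (by omega) le_rfl
          obtain ⟨z, hz⟩ := hI (m : Fin (m+1))
          have h4 := int_lt_le ⟨|z|, by rw [hz]; norm_cast⟩ (hI _)
            (lt_of_le_of_ne h2 h3)
          linarith
        · have hmem2 : ¬ (k ≤ m-1 ∧ m-1 ≤ t) := by omega
          rw [if_neg hmem2]
          simp only [sub_zero]
          exact habs
    · -- nonneg middle coordinates
      intro i h1i him1
      have hi0 : ¬ (i = 0) := by omega
      rw [hphiN i (by omega), if_neg hi0]
      simp only [sub_zero]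
      by_cases hmem : k ≤ i ∧ i ≤ t
      · rw [if_pos hmem, hA i hmem.1 hmem.2]
        linarith
      · rw [if_neg hmem]
        linarith [hnn i h1i him1]
    · -- vanishing beyond 0th coordinate
      intro i h1i him hlt
      rw [hphi0] at hlt
      have hiq : (i:ℚ) ≤ (m:ℚ) := by exact_mod_cast him
      have hlk2 : l (k : Fin (m+1)) < 2 := by linarith
      have hlk1 : l (k : Fin (m+1)) = 1 := by
        have h := int_lt_le (hI _) ⟨2, rfl⟩ hlk2
        push_cast at h
        linarith
      have htm' : t = m := by
        have h5 : (m:ℚ) < (t:ℚ) + 1 := by linarith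
        have h6 : m < t + 1 := by exact_mod_cast h5
        omega
      have him' : i = m := by
        have h5 : (m:ℚ) < (i:ℚ) + 1 := by linarith
        have h6 : m < i + 1 := by exact_mod_cast h5
        omega
      subst him'
      have hi0 : ¬ (i = 0) := by omega
      have hmem : k ≤ i ∧ i ≤ t := by omega
      rw [hphiN i le_rfl, if_neg hi0, if_pos hmem]
      rw [hA i hmem.1 hmem.2, hlk1]
      ring
  · -- block equivalence
    have hchain : ∀ d : ℕ, d ≤ t - k + 1 → blockD m l (nuAux m k l d) := by
      intro d
      induction d with
      | zero => intro _; rw [nuAux_zero]; exact Relation.EqvGen.refl l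
      | succ d ih =>
        intro hd
        refine Relation.EqvGen.trans _ _ _ (ih (by omega)) (Relation.EqvGen.rel _ _ ?_)
        left
        refine ⟨k + d, by omega, by omega, 1, -1, Or.inl rfl, Or.inr rfl, ?_,
          nuAux_succ m k l d⟩
        rw [form_smul, form_eval m _ (k+d) (by omega) (by omega) 1]
        have hv1 : nuAux m k l d 0 = l 0 - d := by
          have h00 : ((0 : Fin (m+1)) : ℕ) = 0 := rfl
          have hnot : ¬ ((0:ℕ) ∈ Finset.Ico k (k+d)) := by
            simp only [Finset.mem_Ico]
            omega
          rw [nuAux_apply m k l d (by omega) 0, h00, if_pos rfl, if_neg hnot]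
          ring
        have hv2 : nuAux m k l d ((k+d : ℕ) : Fin (m+1)) = l ((k+d : ℕ) : Fin (m+1)) := by
          have hne : ¬ (k + d = 0) := by omega
          have hnot : ¬ ((k+d : ℕ) ∈ Finset.Ico k (k+d)) := by
            simp only [Finset.mem_Ico]
            omega
          rw [nuAux_apply m k l d (by omega), fin_coe_val (show k+d ≤ m by omega),
            if_neg hne, if_neg hnot]
          ring
        have hAkd : l ((k+d : ℕ) : Fin (m+1)) = l (k : Fin (m+1)) :=
          hA (k+d) (by omega) (by omega)
        simp only [Pi.add_apply, hv1, hv2, rhoD_zero,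
          rhoD_apply m (k+d) (by omega) (by omega), hAkd]
        rw [hl0]
        push_cast
        ring
    exact hchain (t-k+1) le_rfl
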